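/- Let z_1, …, z_M be complex numbers with nonpositive real part, Re(z_m) ≤ 0 for every m ∈ {1,…,M}. Then |∏_{m=1}^M 1/(1 − z_m) − ∏_{m=1}^M e^{z_m}| ≤ ∑_{m=1}^M min{2, |1 − z_m − e^{−z_m}|}. -/

import Mathlib

lemma prod_sub_prod_abs_le (M : ℕ) (f g : Fin M → ℂ)
    (hf : ∀ m, ‖f m‖ ≤ 1) (hg : ∀ m, ‖g m‖ ≤ 1) :
    ‖∏ m, f m - ∏ m, g m‖ ≤ ∑ m, ‖f m - g m‖ := by
  induction M with
  | zero => simp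
  | succ n ih =>
    rw [Fin.prod_univ_succ, Fin.prod_univ_succ, Fin.sum_univ_succ]
    have key : f 0 * ∏ m, f (Fin.succ m) - g 0 * ∏ m, g (Fin.succ m)
        = (f 0 - g 0) * ∏ m, g (Fin.succ m)
          + f 0 * (∏ m, f (Fin.succ m) - ∏ m, g (Fin.succ m)) := by ring
    rw [key]
    calc ‖_‖ ≤ ‖(f 0 - g 0) * ∏ m, g (Fin.succ m)‖
          + ‖f 0 * (∏ m, f (Fin.succ m) - ∏ m, g (Fin.succ m))‖ :=
        norm_add_le _ _
      _ ≤ ‖f 0 - g 0‖ * 1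
          + 1 * ‖∏ m, f (Fin.succ m) - ∏ m, g (Fin.succ m)‖ := by
        rw [norm_mul, norm_mul]
        gcongr
        · rw [norm_prod]
          exact Finset.prod_le_one (fun i _ => norm_nonneg _) (fun i _ => hg _)
        · exact hf 0
      _ ≤ ‖f 0 - g 0‖ + ∑ m, ‖f (Fin.succ m) - g (Fin.succ m)‖ := by
        rw [mul_one, one_mul]
        gcongr
        exact ih _ _ (fun m => hf _) (fun m => hg _)

/-- Lemma 3 of the paper: if `z_1, …, z_M` are complex numbers with nonpositive real part,
then `|∏ 1/(1 - z_m) - ∏ exp z_m| ≤ ∑ min {2, |1 - z_m - exp (-z_m)|}`. -/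
theorem product_inv_sub_product_exp_bound (M : ℕ) (z : Fin M → ℂ)
    (hz : ∀ m, (z m).re ≤ 0) :
    ‖∏ m, (1 - z m)⁻¹ - ∏ m, Complex.exp (z m)‖ ≤
      ∑ m, min 2 ‖1 - z m - Complex.exp (-z m)‖ := by
  have hge : ∀ m, (1 : ℝ) ≤ ‖1 - z m‖ := by
    intro m
    calc (1 : ℝ) ≤ (1 - z m).re := by simp [Complex.sub_re]; linarith [hz m]
      _ ≤ |(1 - z m).re| := le_abs_self _
      _ ≤ ‖1 - z m‖ := Complex.abs_re_le_norm _
  have hne : ∀ m, (1 - z m) ≠ 0 := by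
    intro m h
    have := hge m
    rw [h] at this
    simp at this
    linarith
  have hinv : ∀ m, ‖(1 - z m)⁻¹‖ ≤ 1 := by
    intro m
    rw [norm_inv]
    exact inv_le_one_of_one_le₀ (hge m)
  have hexp : ∀ m, ‖Complex.exp (z m)‖ ≤ 1 := by
    intro m
    rw [Complex.norm_exp]
    exact Real.exp_le_one_iff.mpr (hz m)
  refine le_trans (prod_sub_prod_abs_le M _ _ hinv hexp) (Finset.sum_le_sum ?_)
  intro m _
  refine le_min ?_ ?_
  · calc ‖(1 - z m)⁻¹ - Complex.exp (z m)‖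
        ≤ ‖(1 - z m)⁻¹‖ + ‖Complex.exp (z m)‖ :=
          norm_sub_le _ _
      _ ≤ 1 + 1 := add_le_add (hinv m) (hexp m)
      _ = 2 := by norm_num
  · have h1 : Complex.exp (z m) * Complex.exp (-z m) = 1 := by
      rw [← Complex.exp_add]; simp
    have key : (1 - z m)⁻¹ - Complex.exp (z m)
        = -((1 - z m)⁻¹ * Complex.exp (z m) * (1 - z m - Complex.exp (-z m))) := by
      have h0 := hne m
      field_simp
      linear_combination -h1
    rw [key, norm_neg, norm_mul, norm_mul]
    calc ‖(1 - z m)⁻¹‖ * ‖Complex.exp (z m)‖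
          * ‖1 - z m - Complex.exp (-z m)‖
        ≤ 1 * 1 * ‖1 - z m - Complex.exp (-z m)‖ := by
          gcongr
          · exact hinv m
          · exact hexp m
      _ = _ := by ring
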